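/- arXiv:2312.06353 — 2 statements merged into one kernel-verified Lean document; each statement's English description precedes it below -/
import Mathlib

section
/- Let E be a real inner product space and f : E → ℝ be differentiable, with gradient ∇f Lipschitz continuous with constant L ≥ 0 (i.e., ‖∇f(u) − ∇f(v)‖ ≤ L‖u − v‖ for all u, v). Then for every w, z ∈ E and every ε ≠ 0, the two-point scalar gradient estimate satisfies |(f(w + ε • z) − f(w − ε • z))/(2ε) − ⟪∇f(w), z⟫| ≤ (L · |ε| · ‖z‖²)/2. -/
open scoped RealInnerProductSpace

private lemma two_point_curve_deriv
    {E : Type*} [NormedAddCommGroup E] [InnerProductSpace ℝ E] [CompleteSpace E]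
    (f : E → ℝ) (hf : Differentiable ℝ f) (x v : E) (t : ℝ) :
    HasDerivAt (fun s : ℝ => f (x + s • v)) ⟪gradient f (x + t • v), v⟫ t := by
  have hc : HasDerivAt (fun s : ℝ => x + s • v) v t := by
    simpa using ((hasDerivAt_id t).smul_const v).const_add x
  have hg : HasGradientAt f (gradient f (x + t • v)) (x + t • v) :=
    (hf (x + t • v)).hasGradientAt
  have hF : HasFDerivAt f (InnerProductSpace.toDual ℝ E (gradient f (x + t • v)))
      (x + t • v) := (hasGradientAt_iff_hasFDerivAt).mp hg
  have h := hF.comp_hasDerivAt t hc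
  rw [InnerProductSpace.toDual_apply_apply] at h
  exact h

private lemma descent_lemma
    {E : Type*} [NormedAddCommGroup E] [InnerProductSpace ℝ E] [CompleteSpace E]
    (f : E → ℝ) (L : ℝ) (hL : 0 ≤ L)
    (hf : Differentiable ℝ f)
    (hlip : ∀ u v : E, ‖gradient f u - gradient f v‖ ≤ L * ‖u - v‖)
    (x y : E) :
    |f y - f x - ⟪gradient f x, y - x⟫| ≤ L * ‖y - x‖ ^ 2 / 2 := by
  set v := y - x with hv
  set F : ℝ → ℝ := fun t => f (x + t • v) - f x - t * ⟪gradient f x, v⟫ with hF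
  set F' : ℝ → ℝ := fun t => ⟪gradient f (x + t • v) - gradient f x, v⟫ with hF'
  have hFderiv : ∀ t : ℝ, HasDerivAt F (F' t) t := by
    intro t
    have h1 := two_point_curve_deriv f hf x v t
    have h2 : HasDerivAt (fun s : ℝ => f x + s * ⟪gradient f x, v⟫)
        ⟪gradient f x, v⟫ t := by
      simpa using ((hasDerivAt_id t).mul_const ⟪gradient f x, v⟫).const_add (f x)
    have := h1.sub h2
    have e : F = (fun s : ℝ => f (x + s • v)) - fun s : ℝ => f x + s * ⟪gradient f x, v⟫ := by
      funext s; simp only [hF, Pi.sub_apply]; ring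
    rw [e, hF']
    exact this.congr_deriv (inner_sub_left _ _ _).symm
  have key : ∀ t ∈ Set.Icc (0:ℝ) 1, |F t| ≤ L * ‖v‖ ^ 2 * t ^ 2 / 2 := by
    intro t ht
    have := image_norm_le_of_norm_deriv_right_le_deriv_boundary
      (f := F) (f' := F') (a := 0) (b := 1)
      (B := fun t => L * ‖v‖ ^ 2 * t ^ 2 / 2) (B' := fun t => L * ‖v‖ ^ 2 * t)
      (fun s _ => (hFderiv s).continuousAt.continuousWithinAt)
      (fun s _ => (hFderiv s).hasDerivWithinAt)
      (by simp [hF])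
      (fun s => by
        have : HasDerivAt (fun t : ℝ => L * ‖v‖ ^ 2 * t ^ 2 / 2)
            (L * ‖v‖ ^ 2 * s) s := by
          have h := ((hasDerivAt_pow 2 s).const_mul (L * ‖v‖ ^ 2)).div_const 2
          exact h.congr_deriv (by ring)
        exact this)
      (fun s hs => by
        have hb : ‖F' s‖ ≤ ‖gradient f (x + s • v) - gradient f x‖ * ‖v‖ := by
          simpa [hF'] using abs_real_inner_le_norm
            (gradient f (x + s • v) - gradient f x) v
        have hb2 : ‖gradient f (x + s • v) - gradient f x‖ ≤ L * (s * ‖v‖) := by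
          have := hlip (x + s • v) x
          simpa [norm_smul, abs_of_nonneg hs.1] using this
        calc ‖F' s‖ ≤ ‖gradient f (x + s • v) - gradient f x‖ * ‖v‖ := hb
          _ ≤ L * (s * ‖v‖) * ‖v‖ := by
              apply mul_le_mul_of_nonneg_right hb2 (norm_nonneg v)
          _ = L * ‖v‖ ^ 2 * s := by ring)
      ht
    simpa using this
  have h1 := key 1 (by norm_num)
  have hx1 : x + (1:ℝ) • v = y := by simp [hv]
  have hx2 : x + v = y := by simp [hv]
  simpa [hF, hx1, hx2] using h1

/-- Under `L`-Lipschitz continuity of the gradient, the two-point scalar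
gradient estimate approximates the directional derivative `⟪∇f(w), z⟫` with
error at most `L * |ε| * ‖z‖² / 2`. -/
theorem two_point_estimate_error_bound
    {E : Type*} [NormedAddCommGroup E] [InnerProductSpace ℝ E] [CompleteSpace E]
    (f : E → ℝ) (L : ℝ) (hL : 0 ≤ L)
    (hf : Differentiable ℝ f)
    (hlip : ∀ u v : E, ‖gradient f u - gradient f v‖ ≤ L * ‖u - v‖)
    (w z : E) (ε : ℝ) (hε : ε ≠ 0) :
    |(f (w + ε • z) - f (w - ε • z)) / (2 * ε) - ⟪gradient f w, z⟫|
      ≤ L * |ε| * ‖z‖ ^ 2 / 2 := by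
  have hA := descent_lemma f L hL hf hlip w (w + ε • z)
  have hB := descent_lemma f L hL hf hlip w (w - ε • z)
  have e1 : w + ε • z - w = ε • z := by abel
  have e2 : w - ε • z - w = -(ε • z) := by abel
  have hnorm : ‖ε • z‖ ^ 2 = ε ^ 2 * ‖z‖ ^ 2 := by
    rw [norm_smul]; rw [Real.norm_eq_abs]; rw [mul_pow, sq_abs]
  have hiA : ⟪gradient f w, ε • z⟫ = ε * ⟪gradient f w, z⟫ := real_inner_smul_right _ _ _
  rw [e1, hiA, hnorm] at hA
  rw [e2] at hB
  rw [inner_neg_right, real_inner_smul_right] at hB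
  rw [norm_neg, hnorm] at hB
  set g : ℝ := ⟪gradient f w, z⟫
  set A : ℝ := f (w + ε • z) - f w - ε * g
  set B : ℝ := f (w - ε • z) - f w - -(ε * g)
  have habs : |A - B| ≤ L * (ε ^ 2 * ‖z‖ ^ 2) := by
    calc |A - B| ≤ |A| + |B| := abs_sub A B
      _ ≤ L * (ε ^ 2 * ‖z‖ ^ 2) / 2 + L * (ε ^ 2 * ‖z‖ ^ 2) / 2 := add_le_add hA hB
      _ = L * (ε ^ 2 * ‖z‖ ^ 2) := by ring
  have heq : (f (w + ε • z) - f (w - ε • z)) / (2 * ε) - g = (A - B) / (2 * ε) := by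
    field_simp [A, B]
    ring
  rw [heq, abs_div]
  rw [div_le_iff₀ (by positivity : (0:ℝ) < |2 * ε|)]
  have h2e : |2 * ε| = 2 * |ε| := by rw [abs_mul]; norm_num
  rw [h2e]
  calc |A - B| ≤ L * (ε ^ 2 * ‖z‖ ^ 2) := habs
    _ = L * |ε| * ‖z‖ ^ 2 / 2 * (2 * |ε|) := by rw [← sq_abs]; ring
end

section
/- Let E be a real inner product space and f : E → ℝ be differentiable, with gradient ∇f Lipschitz continuous with constant L ≥ 0. Then for every w, z ∈ E and every ε ≠ 0, the estimated gradient vector ĝ • z, where ĝ = (f(w + ε • z) − f(w − ε • z))/(2ε), satisfies ‖ĝ • z − ⟪∇f(w), z⟫ • z‖ ≤ (L · |ε| · ‖z‖³)/2. -/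
open scoped RealInnerProductSpace

open Set in
/-- Descent lemma: under `L`-Lipschitz gradient,
`|f (x + h) - f x - ⟪∇f x, h⟫| ≤ L * ‖h‖² / 2`. -/
theorem descent_lemma_aux
    {E : Type*} [NormedAddCommGroup E] [InnerProductSpace ℝ E] [CompleteSpace E]
    (f : E → ℝ) (L : ℝ)
    (hf : Differentiable ℝ f)
    (hlip : ∀ u v : E, ‖gradient f u - gradient f v‖ ≤ L * ‖u - v‖)
    (x h : E) :
    |f (x + h) - f x - ⟪gradient f x, h⟫| ≤ L * ‖h‖ ^ 2 / 2 := by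
  set g : ℝ → ℝ := fun t => f (x + t • h) - f x - t * ⟪gradient f x, h⟫ with hg
  have hc : ∀ t : ℝ, HasDerivAt (fun s : ℝ => x + s • h) h t := fun t => by
    simpa using (hasDerivAt_id t).smul_const h
  have hg' : ∀ t : ℝ, HasDerivAt g
      (⟪gradient f (x + t • h) - gradient f x, h⟫) t := by
    intro t
    have h1 : HasDerivAt (fun s : ℝ => f (x + s • h))
        (⟪gradient f (x + t • h), h⟫) t := by
      have := ((hf (x + t • h)).hasGradientAt.hasFDerivAt).comp_hasDerivAt t (hc t)
      simp only [InnerProductSpace.toDual_apply_apply] at this ⊢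
      exact this
    have h2 : HasDerivAt (fun s : ℝ => f x + s * ⟪gradient f x, h⟫)
        (⟪gradient f x, h⟫) t := by
      simpa using (hasDerivAt_id t).mul_const ⟪gradient f x, h⟫
    have := h1.sub h2
    simp only [inner_sub_left]
    refine this.congr_of_eventuallyEq (Filter.Eventually.of_forall fun s => ?_)
    simp [hg]; ring
  have hB : ∀ t : ℝ, HasDerivAt (fun t : ℝ => L * ‖h‖ ^ 2 / 2 * t ^ 2)
      (L * ‖h‖ ^ 2 * t) t := by
    intro t
    have := (hasDerivAt_pow 2 t).const_mul (L * ‖h‖ ^ 2 / 2)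
    refine this.congr_deriv ?_
    ring
  have bound : ∀ t ∈ Ico (0 : ℝ) 1,
      ‖⟪gradient f (x + t • h) - gradient f x, h⟫‖ ≤ L * ‖h‖ ^ 2 * t := by
    intro t ht
    calc ‖⟪gradient f (x + t • h) - gradient f x, h⟫‖
        ≤ ‖gradient f (x + t • h) - gradient f x‖ * ‖h‖ := norm_inner_le_norm _ _
      _ ≤ (L * ‖x + t • h - x‖) * ‖h‖ :=
          mul_le_mul_of_nonneg_right (hlip _ _) (norm_nonneg _)
      _ = L * ‖h‖ ^ 2 * t := by
          rw [add_sub_cancel_left, norm_smul]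
          simp [Real.norm_eq_abs, abs_of_nonneg ht.1]
          ring
  have key := image_norm_le_of_norm_deriv_right_le_deriv_boundary
    (f := g) (f' := fun t => ⟪gradient f (x + t • h) - gradient f x, h⟫)
    (a := 0) (b := 1)
    (fun t _ => (hg' t).continuousAt.continuousWithinAt)
    (fun t _ => (hg' t).hasDerivWithinAt)
    (by simp [hg]) hB bound (right_mem_Icc.2 zero_le_one)
  have : g 1 = f (x + h) - f x - ⟪gradient f x, h⟫ := by simp [hg]
  rw [this] at key
  simpa [Real.norm_eq_abs] using key

/-- Under `L`-Lipschitz continuity of the gradient, the estimated gradient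
vector `ĝ • z` approximates `⟪∇f(w), z⟫ • z` with error at most
`L * |ε| * ‖z‖³ / 2`. -/
theorem estimated_gradient_vector_error_bound
    {E : Type*} [NormedAddCommGroup E] [InnerProductSpace ℝ E] [CompleteSpace E]
    (f : E → ℝ) (L : ℝ) (hL : 0 ≤ L)
    (hf : Differentiable ℝ f)
    (hlip : ∀ u v : E, ‖gradient f u - gradient f v‖ ≤ L * ‖u - v‖)
    (w z : E) (ε : ℝ) (hε : ε ≠ 0) :
    ‖((f (w + ε • z) - f (w - ε • z)) / (2 * ε)) • z - ⟪gradient f w, z⟫ • z‖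
      ≤ L * |ε| * ‖z‖ ^ 3 / 2 := by
  have hεpos : 0 < |ε| := abs_pos.2 hε
  have h1 := descent_lemma_aux f L hf hlip w (ε • z)
  have h2 := descent_lemma_aux f L hf hlip w (-(ε • z))
  rw [← sub_eq_add_neg] at h2
  have hnorm : ‖ε • z‖ ^ 2 = ε ^ 2 * ‖z‖ ^ 2 := by
    rw [norm_smul, Real.norm_eq_abs, mul_pow, sq_abs]
  rw [hnorm] at h1
  rw [norm_neg, hnorm] at h2
  rw [inner_smul_right] at h1
  rw [inner_neg_right, inner_smul_right] at h2
  set a := ⟪gradient f w, z⟫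
  have hsum : |f (w + ε • z) - f (w - ε • z) - 2 * ε * a| ≤ L * ε ^ 2 * ‖z‖ ^ 2 := by
    have := abs_sub (f (w + ε • z) - f w - ε * a) (f (w - ε • z) - f w - -(ε * a))
    calc |f (w + ε • z) - f (w - ε • z) - 2 * ε * a|
        = |(f (w + ε • z) - f w - ε * a) - (f (w - ε • z) - f w - -(ε * a))| := by
          ring_nf
      _ ≤ |f (w + ε • z) - f w - ε * a| + |f (w - ε • z) - f w - -(ε * a)| :=
          abs_sub _ _
      _ ≤ L * (ε ^ 2 * ‖z‖ ^ 2) / 2 + L * (ε ^ 2 * ‖z‖ ^ 2) / 2 := add_le_add h1 h2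
      _ = L * ε ^ 2 * ‖z‖ ^ 2 := by ring
  have hgbound : |(f (w + ε • z) - f (w - ε • z)) / (2 * ε) - a|
      ≤ L * |ε| * ‖z‖ ^ 2 / 2 := by
    have h2ε : (2 : ℝ) * ε ≠ 0 := by positivity <;> simp_all
    have : (f (w + ε • z) - f (w - ε • z)) / (2 * ε) - a
        = (f (w + ε • z) - f (w - ε • z) - 2 * ε * a) / (2 * ε) := by
      field_simp
    rw [this, abs_div, abs_mul, abs_two]
    rw [div_le_iff₀ (by positivity)]
    calc |f (w + ε • z) - f (w - ε • z) - 2 * ε * a|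
        ≤ L * ε ^ 2 * ‖z‖ ^ 2 := hsum
      _ = L * |ε| * ‖z‖ ^ 2 / 2 * (2 * |ε|) := by rw [← sq_abs]; ring
  calc ‖((f (w + ε • z) - f (w - ε • z)) / (2 * ε)) • z - a • z‖
      = |(f (w + ε • z) - f (w - ε • z)) / (2 * ε) - a| * ‖z‖ := by
        rw [← sub_smul, norm_smul, Real.norm_eq_abs]
    _ ≤ L * |ε| * ‖z‖ ^ 2 / 2 * ‖z‖ :=
        mul_le_mul_of_nonneg_right hgbound (norm_nonneg _)
    _ = L * |ε| * ‖z‖ ^ 3 / 2 := by ring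
end
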